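/- Let W : ℝ≥0² → ℝ≥0 be twice continuously differentiable with ∂²W/∂u² > 0, ∂²W/∂v² > 0, ∂²W/∂u∂v ≥ 0 on the nonnegative quadrant, and suppose W(u,v) → ∞ as u+v → ∞. Then there exist constants ū, v̄ ≥ 0 such that ∂W/∂u(u,v) > 0 for all u ≥ ū and all v ≥ 0, and ∂W/∂v(u,v) > 0 for all v ≥ v̄ and all u ≥ 0. -/
import Mathlib


open Filter Topology

private lemma mono_aux (f f' : ℝ → ℝ) (h : ∀ x : ℝ, 0 ≤ x → HasDerivAt f (f' x) x)
    (h' : ∀ x : ℝ, 0 ≤ x → 0 ≤ f' x) : MonotoneOn f (Set.Ici 0) := by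
  apply monotoneOn_of_deriv_nonneg (convex_Ici 0)
  · exact fun x hx => (h x hx).continuousAt.continuousWithinAt
  · intro x hx
    rw [interior_Ici] at hx
    exact (h x (le_of_lt hx)).differentiableAt.differentiableWithinAt
  · intro x hx
    rw [interior_Ici] at hx
    rw [(h x (le_of_lt hx)).deriv]
    exact h' x (le_of_lt hx)

/-- a C² convex radially-unbounded function on the quadrant has
eventually positive partial derivatives. -/
theorem stmt1
    (W Wu Wv Wuu Wvv Wuv : ℝ → ℝ → ℝ)
    (hWnn : ∀ u v : ℝ, 0 ≤ u → 0 ≤ v → 0 ≤ W u v)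
    (hWu : ∀ u v : ℝ, 0 ≤ u → 0 ≤ v → HasDerivAt (fun x => W x v) (Wu u v) u)
    (hWv : ∀ u v : ℝ, 0 ≤ u → 0 ≤ v → HasDerivAt (fun y => W u y) (Wv u v) v)
    (hWuu : ∀ u v : ℝ, 0 ≤ u → 0 ≤ v → HasDerivAt (fun x => Wu x v) (Wuu u v) u)
    (hWvv : ∀ u v : ℝ, 0 ≤ u → 0 ≤ v → HasDerivAt (fun y => Wv u y) (Wvv u v) v)
    (hWuv : ∀ u v : ℝ, 0 ≤ u → 0 ≤ v → HasDerivAt (fun y => Wu u y) (Wuv u v) v)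
    (hcWu : Continuous fun p : ℝ × ℝ => Wu p.1 p.2)
    (hcWv : Continuous fun p : ℝ × ℝ => Wv p.1 p.2)
    (hcWuu : Continuous fun p : ℝ × ℝ => Wuu p.1 p.2)
    (hcWvv : Continuous fun p : ℝ × ℝ => Wvv p.1 p.2)
    (hcWuv : Continuous fun p : ℝ × ℝ => Wuv p.1 p.2)
    (hpuu : ∀ u v : ℝ, 0 ≤ u → 0 ≤ v → 0 < Wuu u v)
    (hpvv : ∀ u v : ℝ, 0 ≤ u → 0 ≤ v → 0 < Wvv u v)
    (hpuv : ∀ u v : ℝ, 0 ≤ u → 0 ≤ v → 0 ≤ Wuv u v)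
    (hrad : ∀ C : ℝ, ∃ R : ℝ, ∀ u v : ℝ, 0 ≤ u → 0 ≤ v → R ≤ u + v → C ≤ W u v) :
    ∃ ubar vbar : ℝ, 0 ≤ ubar ∧ 0 ≤ vbar ∧
      (∀ u v : ℝ, ubar ≤ u → 0 ≤ v → 0 < Wu u v) ∧
      (∀ u v : ℝ, 0 ≤ u → vbar ≤ v → 0 < Wv u v) := by
  obtain ⟨R, hR⟩ := hrad (W 0 0 + 1)
  set a : ℝ := max R 1 with ha
  have ha1 : (1 : ℝ) ≤ a := le_max_right _ _
  have ha0 : (0 : ℝ) < a := lt_of_lt_of_le one_pos ha1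
  have haR : R ≤ a := le_max_left _ _
  -- monotonicity helpers
  have monoWu_u : ∀ v : ℝ, 0 ≤ v → MonotoneOn (fun x => Wu x v) (Set.Ici 0) := by
    intro v hv
    exact mono_aux _ (fun x => Wuu x v) (fun x hx => hWuu x v hx hv)
      (fun x hx => (hpuu x v hx hv).le)
  have monoWu_v : ∀ u : ℝ, 0 ≤ u → MonotoneOn (fun y => Wu u y) (Set.Ici 0) := by
    intro u hu
    exact mono_aux _ (fun y => Wuv u y) (fun y hy => hWuv u y hu hy)
      (fun y hy => hpuv u y hu hy)
  have monoWv_v : ∀ u : ℝ, 0 ≤ u → MonotoneOn (fun y => Wv u y) (Set.Ici 0) := by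
    intro u hu
    exact mono_aux _ (fun y => Wvv u y) (fun y hy => hWvv u y hu hy)
      (fun y hy => (hpvv u y hu hy).le)
  refine ⟨a, a, ha0.le, ha0.le, ?_, ?_⟩
  · -- u part
    have hWa0 : W 0 0 + 1 ≤ W a 0 := hR a 0 ha0.le le_rfl (by simpa using haR)
    -- MVT on x ↦ W x 0 over [0, a]
    obtain ⟨c, hc, hceq⟩ : ∃ c ∈ Set.Ioo (0:ℝ) a, Wu c 0 = (W a 0 - W 0 0) / (a - 0) := by
      apply exists_hasDerivAt_eq_slope (fun x => W x 0) (fun x => Wu x 0) ha0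
      · exact fun x hx => (hWu x 0 hx.1 le_rfl).continuousAt.continuousWithinAt
      · exact fun x hx => hWu x 0 hx.1.le le_rfl
    have hc1 : 0 < Wu c 0 := by
      rw [hceq]
      apply div_pos _ (by simpa using ha0)
      linarith
    have hca : Wu c 0 ≤ Wu a 0 := monoWu_u 0 le_rfl hc.1.le (Set.mem_Ici.mpr ha0.le) hc.2.le
    intro u v hu hv
    have hu0 : (0:ℝ) ≤ u := le_trans ha0.le hu
    have h1 : Wu a 0 ≤ Wu u 0 := monoWu_u 0 le_rfl (Set.mem_Ici.mpr ha0.le) (Set.mem_Ici.mpr hu0) hu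
    have h2 : Wu u 0 ≤ Wu u v := monoWu_v u hu0 Set.self_mem_Ici (Set.mem_Ici.mpr hv) hv
    linarith
  · -- v part
    have hW0a : W 0 0 + 1 ≤ W 0 a := hR 0 a le_rfl ha0.le (by simpa using haR)
    intro u v hu hv
    have hv0 : (0:ℝ) ≤ v := le_trans ha0.le hv
    -- W u a - W u 0 ≥ W 0 a - W 0 0
    have hdiff : W 0 a - W 0 0 ≤ W u a - W u 0 := by
      have hmg : MonotoneOn (fun x => W x a - W x 0) (Set.Ici 0) := by
        apply mono_aux _ (fun x => Wu x a - Wu x 0)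
        · exact fun x hx => (hWu x a hx ha0.le).sub (hWu x 0 hx le_rfl)
        · intro x hx
          have := monoWu_v x hx Set.self_mem_Ici (Set.mem_Ici.mpr ha0.le) ha0.le
          simpa using sub_nonneg.mpr this
      simpa using hmg Set.self_mem_Ici (Set.mem_Ici.mpr hu) hu
    -- MVT on y ↦ W u y over [0, a]
    obtain ⟨c, hc, hceq⟩ : ∃ c ∈ Set.Ioo (0:ℝ) a, Wv u c = (W u a - W u 0) / (a - 0) := by
      apply exists_hasDerivAt_eq_slope (fun y => W u y) (fun y => Wv u y) ha0
      · exact fun y hy => (hWv u y hu hy.1).continuousAt.continuousWithinAt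
      · exact fun y hy => hWv u y hu hy.1.le
    have hc1 : 0 < Wv u c := by
      rw [hceq]
      apply div_pos _ (by simpa using ha0)
      linarith
    have hca : Wv u c ≤ Wv u a := monoWv_v u hu hc.1.le (Set.mem_Ici.mpr ha0.le) hc.2.le
    have h1 : Wv u a ≤ Wv u v := monoWv_v u hu (Set.mem_Ici.mpr ha0.le) (Set.mem_Ici.mpr hv0) hv
    linarith
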